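/- Let r, s ∈ ℂ^N be linearly independent vectors and let A = r r† − s s†. Set Δ = (‖r‖² + ‖s‖²)² − 4|⟨r, s⟩|², η₁ = (‖r‖² − ‖s‖² + √Δ)/2 and η₂ = (‖r‖² − ‖s‖² − √Δ)/2. Then Δ > 0, η₁ > 0 and η₂ < 0 are eigenvalues of A, and every nonzero eigenvalue of A equals η₁ or η₂ (so A has exactly one positive and one negative eigenvalue). -/

import Mathlib

open scoped ComplexConjugate

/-- For linearly independent `r, s ∈ ℂ^N` and `A = r r† − s s†`,
with `Δ = (‖r‖² + ‖s‖²)² − 4|⟨r,s⟩|²`, `η₁ = (‖r‖² − ‖s‖² + √Δ)/2`,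
`η₂ = (‖r‖² − ‖s‖² − √Δ)/2`, one has `Δ > 0`, `η₁ > 0` and `η₂ < 0` are eigenvalues of `A`,
and every nonzero eigenvalue of `A` equals `η₁` or `η₂`. -/
theorem stmt1 {N : ℕ} (r s : EuclideanSpace ℂ (Fin N))
    (hind : LinearIndependent ℂ ![r, s])
    (A : EuclideanSpace ℂ (Fin N) → EuclideanSpace ℂ (Fin N))
    (hA : ∀ x, A x = (inner ℂ r x : ℂ) • r - (inner ℂ s x : ℂ) • s)
    (Δ η₁ η₂ : ℝ)
    (hΔ : Δ = (‖r‖ ^ 2 + ‖s‖ ^ 2) ^ 2 - 4 * ‖(inner ℂ r s : ℂ)‖ ^ 2)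
    (hη₁ : η₁ = (‖r‖ ^ 2 - ‖s‖ ^ 2 + Real.sqrt Δ) / 2)
    (hη₂ : η₂ = (‖r‖ ^ 2 - ‖s‖ ^ 2 - Real.sqrt Δ) / 2) :
    0 < Δ ∧ 0 < η₁ ∧ η₂ < 0 ∧
    (∃ x : EuclideanSpace ℂ (Fin N), x ≠ 0 ∧ A x = (η₁ : ℂ) • x) ∧
    (∃ x : EuclideanSpace ℂ (Fin N), x ≠ 0 ∧ A x = (η₂ : ℂ) • x) ∧
    ∀ lam : ℂ, lam ≠ 0 → (∃ x : EuclideanSpace ℂ (Fin N), x ≠ 0 ∧ A x = lam • x) →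
      lam = (η₁ : ℂ) ∨ lam = (η₂ : ℂ) := by
  have hpair : ∀ a b : ℂ, a • r + b • s = 0 → a = 0 ∧ b = 0 :=
    LinearIndependent.pair_iff.1 hind
  have hr0 : r ≠ 0 := by
    intro h
    exact one_ne_zero ((hpair 1 0 (by simp [h])).1)
  have hs0 : s ≠ 0 := by
    intro h
    exact one_ne_zero ((hpair 0 1 (by simp [h])).2)
  set c : ℂ := (inner ℂ r s : ℂ) with hc
  set R : ℝ := ‖r‖ ^ 2 with hR
  set S : ℝ := ‖s‖ ^ 2 with hS
  set C : ℝ := ‖c‖ with hCdef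
  -- strict Cauchy-Schwarz
  have hCS : C < ‖r‖ * ‖s‖ := by
    have hCn : C = ‖c‖ := rfl
    rw [hCn]
    refine lt_of_le_of_ne (norm_inner_le_norm (𝕜 := ℂ) r s) ?_
    intro h
    rcases ((norm_inner_eq_norm_tfae (𝕜 := ℂ) r s).out 0 2).1 h with h | ⟨k, hk⟩
    · exact hr0 h
    · rcases hpair k (-1) (by rw [hk]; module) with ⟨-, h1⟩
      exact one_ne_zero (neg_eq_zero.1 h1)
  have hRpos : 0 < R := by rw [hR]; exact pow_pos (norm_pos_iff.2 hr0) 2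
  have hSpos : 0 < S := by rw [hS]; exact pow_pos (norm_pos_iff.2 hs0) 2
  have hC2 : C ^ 2 < R * S := by
    have h0 : (0:ℝ) ≤ C := norm_nonneg c
    rw [hR, hS]
    nlinarith [mul_self_lt_mul_self h0 hCS]
  have hΔpos : 0 < Δ := by rw [hΔ]; nlinarith [sq_nonneg (R - S)]
  have hsq : Real.sqrt Δ ^ 2 = Δ := Real.sq_sqrt hΔpos.le
  have habs : |R - S| < Real.sqrt Δ := by
    rw [← Real.sqrt_sq_eq_abs]
    exact Real.sqrt_lt_sqrt (sq_nonneg _) (by nlinarith)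
  have habs' := abs_lt.1 habs
  have hη₁pos : 0 < η₁ := by rw [hη₁]; linarith [habs'.1]
  have hη₂neg : η₂ < 0 := by rw [hη₂]; linarith [habs'.2]
  -- real quadratic identities
  have hroot1 : η₁ ^ 2 - (R - S) * η₁ + (C ^ 2 - R * S) = 0 := by
    rw [hη₁]; linear_combination (1/4 : ℝ) * hsq + (1/4 : ℝ) * hΔ
  have hroot2 : η₂ ^ 2 - (R - S) * η₂ + (C ^ 2 - R * S) = 0 := by
    rw [hη₂]; linear_combination (1/4 : ℝ) * hsq + (1/4 : ℝ) * hΔ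
  have hsum : η₁ + η₂ = R - S := by rw [hη₁, hη₂]; ring
  have hprod : η₁ * η₂ = C ^ 2 - R * S := by
    rw [hη₁, hη₂]; linear_combination (-1/4 : ℝ) * hsq - (1/4 : ℝ) * hΔ
  -- complex versions
  have hroot1c : (η₁ : ℂ) ^ 2 - ((R : ℂ) - (S : ℂ)) * (η₁ : ℂ)
      + ((C : ℂ) ^ 2 - (R : ℂ) * (S : ℂ)) = 0 := by
    have := congrArg (Complex.ofReal) hroot1
    push_cast at this
    linear_combination this
  have hroot2c : (η₂ : ℂ) ^ 2 - ((R : ℂ) - (S : ℂ)) * (η₂ : ℂ)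
      + ((C : ℂ) ^ 2 - (R : ℂ) * (S : ℂ)) = 0 := by
    have := congrArg (Complex.ofReal) hroot2
    push_cast at this
    linear_combination this
  have hsumc : (η₁ : ℂ) + (η₂ : ℂ) = (R : ℂ) - (S : ℂ) := by
    have := congrArg (Complex.ofReal) hsum
    push_cast at this
    linear_combination this
  have hprodc : (η₁ : ℂ) * (η₂ : ℂ) = (C : ℂ) ^ 2 - (R : ℂ) * (S : ℂ) := by
    have := congrArg (Complex.ofReal) hprod
    push_cast at this
    linear_combination this
  -- complex inner product facts
  have hrr : (inner ℂ r r : ℂ) = (R : ℂ) := by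
    rw [inner_self_eq_norm_sq_to_K, hR]; norm_cast
  have hss : (inner ℂ s s : ℂ) = (S : ℂ) := by
    rw [inner_self_eq_norm_sq_to_K, hS]; norm_cast
  have hsr : (inner ℂ s r : ℂ) = conj c := by rw [hc, ← inner_conj_symm]
  have hcc : conj c * c = ((C : ℂ)) ^ 2 := by
    rw [hCdef, ← Complex.normSq_eq_conj_mul_self]
    norm_cast
    exact (Complex.sq_norm c).symm
  refine ⟨hΔpos, hη₁pos, hη₂neg, ?_, ?_, ?_⟩
  · -- eigenvector for η₁ : x₁ = (η₁ + S) • r - conj c • s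
    refine ⟨((η₁ : ℂ) + (S : ℂ)) • r - (conj c) • s, ?_, ?_⟩
    · intro h
      have h' : ((η₁ : ℂ) + (S : ℂ)) • r + (-(conj c)) • s = 0 := by
        rw [neg_smul, ← sub_eq_add_neg]; exact h
      have hne : (η₁ : ℂ) + (S : ℂ) ≠ 0 := by
        rw [← Complex.ofReal_add]
        exact_mod_cast ne_of_gt (by positivity : (0:ℝ) < η₁ + S)
      exact hne (hpair _ _ h').1
    · rw [hA]
      have i1 : (inner ℂ r (((η₁ : ℂ) + (S : ℂ)) • r - (conj c) • s) : ℂ)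
          = (η₁ : ℂ) * ((η₁ : ℂ) + (S : ℂ)) := by
        rw [inner_sub_right, inner_smul_right, inner_smul_right, hrr, ← hc]
        linear_combination (-1 : ℂ) * hroot1c - hcc
      have i2 : (inner ℂ s (((η₁ : ℂ) + (S : ℂ)) • r - (conj c) • s) : ℂ)
          = (η₁ : ℂ) * conj c := by
        rw [inner_sub_right, inner_smul_right, inner_smul_right, hss, hsr]
        ring
      rw [i1, i2]
      module
  · -- eigenvector for η₂ : x₂ = c • r + (η₂ - R) • s
    refine ⟨c • r + ((η₂ : ℂ) - (R : ℂ)) • s, ?_, ?_⟩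
    · intro h
      have hne : (η₂ : ℂ) - (R : ℂ) ≠ 0 := by
        rw [← Complex.ofReal_sub]
        exact_mod_cast ne_of_lt (by linarith : η₂ - R < 0)
      exact hne (hpair _ _ h).2
    · rw [hA]
      have i1 : (inner ℂ r (c • r + ((η₂ : ℂ) - (R : ℂ)) • s) : ℂ)
          = (η₂ : ℂ) * c := by
        rw [inner_add_right, inner_smul_right, inner_smul_right, hrr, ← hc]
        ring
      have i2 : (inner ℂ s (c • r + ((η₂ : ℂ) - (R : ℂ)) • s) : ℂ)
          = -((η₂ : ℂ) * ((η₂ : ℂ) - (R : ℂ))) := by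
        rw [inner_add_right, inner_smul_right, inner_smul_right, hss, hsr]
        linear_combination hroot2c + hcc
      rw [i1, i2]
      module
  · -- converse
    rintro lam hlam ⟨x, hx0, hx⟩
    set a : ℂ := (inner ℂ r x : ℂ) with ha
    set b : ℂ := (inner ℂ s x : ℂ) with hb
    rw [hA] at hx
    rw [← ha, ← hb] at hx
    have hAx : a • r - b • s = lam • x := hx
    have e1 : lam * a = a * (R : ℂ) - b * c := by
      have := congrArg (fun y => (inner ℂ r y : ℂ)) hAx
      simpa [inner_sub_right, inner_smul_right, hrr, ← hc, ← ha, mul_comm, ← Complex.ofReal_pow, ← hR] using this.symm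
    have e2 : lam * b = a * conj c - b * (S : ℂ) := by
      have := congrArg (fun y => (inner ℂ s y : ℂ)) hAx
      simpa [inner_sub_right, inner_smul_right, hss, hsr, ← hb, mul_comm, ← Complex.ofReal_pow, ← hS] using this.symm
    have hab : a ≠ 0 ∨ b ≠ 0 := by
      by_contra h
      push_neg at h
      apply hx0
      have : lam • x = 0 := by rw [← hAx, h.1, h.2]; simp
      rcases smul_eq_zero.1 this with h' | h'
      · exact absurd h' hlam
      · exact h'
    have hfac : (lam - (R : ℂ)) * (lam + (S : ℂ)) + (C : ℂ) ^ 2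
        = (lam - (η₁ : ℂ)) * (lam - (η₂ : ℂ)) := by
      linear_combination lam * hsumc - hprodc
    have hzero : (lam - (η₁ : ℂ)) * (lam - (η₂ : ℂ)) = 0 := by
      rcases hab with hA' | hB'
      · have key : ((lam - (R : ℂ)) * (lam + (S : ℂ)) + (C : ℂ) ^ 2) * a = 0 := by
          linear_combination (lam + (S:ℂ)) * e1 - c * e2 - a * hcc
        rw [hfac] at key
        exact (mul_eq_zero.1 key).resolve_right hA'
      · have key : ((lam - (R : ℂ)) * (lam + (S : ℂ)) + (C : ℂ) ^ 2) * b = 0 := by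
          linear_combination (lam - (R:ℂ)) * e2 + conj c * e1 - b * hcc
        rw [hfac] at key
        exact (mul_eq_zero.1 key).resolve_right hB'
    rcases mul_eq_zero.1 hzero with h | h
    · exact Or.inl (sub_eq_zero.1 h)
    · exact Or.inr (sub_eq_zero.1 h)
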